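/- Let 𝒜 = {A_0, ..., A_{k-1}} be a finite set of d×d complex matrices and let m ≥ 1 and i_0, ..., i_{m-1} be indices. Then ρ(A_{i_0} ⋯ A_{i_{m-1}})^{1/m} ≤ ρ(𝒜), i.e., the m-th root of the spectral radius of any product of m matrices from 𝒜 is a lower bound for the joint spectral radius of 𝒜. -/

import Mathlib

open Filter Matrix
open scoped Topology ENNReal

noncomputable def mnorm {d : ℕ} (A : Matrix (Fin d) (Fin d) ℂ) : ℝ :=
  ‖Matrix.toEuclideanCLM (𝕜 := ℂ) (n := Fin d) A‖

/-- The joint spectral radius of a finite family of matrices. -/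
noncomputable def jsr {k d : ℕ} (A : Fin k → Matrix (Fin d) (Fin d) ℂ) : ℝ :=
  Filter.limsup (fun n : ℕ =>
    ⨆ w : Fin n → Fin k, mnorm (List.ofFn (fun j => A (w j))).prod ^ ((n : ℝ)⁻¹))
    Filter.atTop

/-- The spectral radius of a single matrix. -/
noncomputable def specRad {d : ℕ} (A : Matrix (Fin d) (Fin d) ℂ) : ℝ :=
  (spectralRadius ℂ A).toReal

/-- The k-kernel of a sequence. -/
def kKernel {K : Type*} (k : ℕ) (f : ℕ → K) : Set (ℕ → K) :=
  {g | ∃ ℓ r : ℕ, r < k ^ ℓ ∧ g = fun n => f (k ^ ℓ * n + r)}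

/-- A sequence is k-regular if the span of its k-kernel is finite dimensional. -/
def IsKRegular (K : Type*) [Field K] (k : ℕ) (f : ℕ → K) : Prop :=
  FiniteDimensional K (Submodule.span K (kKernel k f))

/-- The product A_{i_0} ⋯ A_{i_s} along the base-k digits (n)_k = i_s ⋯ i_0 of n. -/
def digProd {K : Type*} [Semiring K] {d k : ℕ} (A : Fin k → Matrix (Fin d) (Fin d) K)
    (n : ℕ) : Matrix (Fin d) (Fin d) K :=
  ((Nat.digits k n).map (fun i => if h : i < k then A ⟨i, h⟩ else 1)).prod

lemma periodic_shift {M : Type*} (g : ℕ → M) (m : ℕ) (hg : ∀ t, g (t + m) = g t) :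
    ∀ j t, g (t + j * m) = g t := by
  intro j
  induction j with
  | zero => simp
  | succ j ih =>
    intro t
    have h : t + (j + 1) * m = (t + j * m) + m := by ring
    rw [h, hg, ih]

lemma prod_range_mul {M : Type*} [Monoid M] (g : ℕ → M) (m : ℕ)
    (hg : ∀ t, g (t + m) = g t) (j : ℕ) :
    ((List.range (j * m)).map g).prod = (((List.range m).map g).prod) ^ j := by
  induction j with
  | zero => simp
  | succ j ih =>
    have h1 : (j + 1) * m = j * m + m := by ring
    rw [h1, List.range_add, List.map_append, List.prod_append, ih, pow_succ]
    congr 2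
    rw [List.map_map]
    congr 1
    funext t
    simp only [Function.comp_apply]
    rw [Nat.add_comm (j * m) t, periodic_shift g m hg j t]

lemma ofFn_eq_range_map {M : Type*} (n : ℕ) (g : ℕ → M) :
    (List.ofFn fun i : Fin n => g i.1) = (List.range n).map g := by
  apply List.ext_getElem <;> simp

lemma norm_list_prod_le_pow {d : ℕ} {C : ℝ} (hC : 0 ≤ C) :
    ∀ (L : List (EuclideanSpace ℂ (Fin d) →L[ℂ] EuclideanSpace ℂ (Fin d))),
    (∀ x ∈ L, ‖x‖ ≤ C) → ‖L.prod‖ ≤ C ^ L.length := by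
  intro L
  induction L with
  | nil =>
    intro _
    rw [List.prod_nil, List.length_nil, pow_zero, ContinuousLinearMap.one_def]
    exact ContinuousLinearMap.norm_id_le
  | cons a L ih =>
    intro h
    rw [List.prod_cons, List.length_cons, pow_succ']
    exact le_trans (norm_mul_le _ _)
      (mul_le_mul (h a List.mem_cons_self)
        (ih fun x hx => h x (List.mem_cons_of_mem _ hx)) (norm_nonneg _) hC)

theorem stmt11 {k d m : ℕ} (hm : 0 < m) (A : Fin k → Matrix (Fin d) (Fin d) ℂ)
    (w : Fin m → Fin k) :
    specRad (List.ofFn (fun j => A (w j))).prod ^ ((m : ℝ)⁻¹) ≤ jsr A := by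
  classical
  set φ := Matrix.toEuclideanCLM (𝕜 := ℂ) (n := Fin d) with hφ
  set B := (List.ofFn fun j => A (w j)).prod with hB
  have hk : 0 < k := (w ⟨0, hm⟩).pos
  haveI : Nonempty (Fin k) := ⟨⟨0, hk⟩⟩
  set C : ℝ := 1 + ∑ i, mnorm (A i) with hC
  have hC1 : 1 ≤ C := le_add_of_nonneg_right (Finset.sum_nonneg fun i _ => norm_nonneg _)
  have hC0 : 0 ≤ C := zero_le_one.trans hC1
  have hAC : ∀ i, mnorm (A i) ≤ C := by
    intro i
    have h := Finset.single_le_sum (f := fun i => mnorm (A i))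
      (fun i _ => norm_nonneg _) (Finset.mem_univ i)
    simp only [hC]; linarith
  set F : ℕ → ℝ := fun n =>
    ⨆ w' : Fin n → Fin k, mnorm (List.ofFn fun j => A (w' j)).prod ^ ((n : ℝ)⁻¹) with hF
  have hjsr : jsr A = limsup F atTop := rfl
  -- each term bounded
  have hterm : ∀ (n : ℕ) (w' : Fin n → Fin k),
      mnorm (List.ofFn fun j => A (w' j)).prod ≤ C ^ n := by
    intro n w'
    have heq : mnorm (List.ofFn fun j => A (w' j)).prod
        = ‖(List.ofFn fun j => φ (A (w' j))).prod‖ := by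
      rw [mnorm, ← hφ, map_list_prod, List.map_ofFn]
      rfl
    rw [heq]
    have := norm_list_prod_le_pow hC0 (List.ofFn fun j => φ (A (w' j))) ?_
    · rwa [List.length_ofFn] at this
    · intro x hx
      rw [List.mem_ofFn] at hx
      obtain ⟨i, rfl⟩ := hx
      exact hAC _
  have htermR : ∀ (n : ℕ) (w' : Fin n → Fin k),
      mnorm (List.ofFn fun j => A (w' j)).prod ^ ((n : ℝ)⁻¹) ≤ C := by
    intro n w'
    rcases Nat.eq_zero_or_pos n with h0 | hn
    · subst h0
      simp only [Nat.cast_zero, _root_.inv_zero, Real.rpow_zero]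
      exact hC1
    · have hne : (n : ℝ) ≠ 0 := Nat.cast_ne_zero.mpr hn.ne'
      calc mnorm (List.ofFn fun j => A (w' j)).prod ^ ((n : ℝ)⁻¹)
          ≤ (C ^ n) ^ ((n : ℝ)⁻¹) :=
            Real.rpow_le_rpow (norm_nonneg _) (hterm n w') (by positivity)
        _ = C := by
            rw [← Real.rpow_natCast C n, ← Real.rpow_mul hC0,
              mul_inv_cancel₀ hne, Real.rpow_one]
  have hFle : ∀ n, F n ≤ C := fun n => ciSup_le fun w' => htermR n w'
  have hF0 : ∀ n, 0 ≤ F n := fun n =>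
    Real.iSup_nonneg fun w' => Real.rpow_nonneg (norm_nonneg _) _
  have hbdd : ∀ n : ℕ, BddAbove (Set.range fun w' : Fin n → Fin k =>
      mnorm (List.ofFn fun j => A (w' j)).prod ^ ((n : ℝ)⁻¹)) := by
    intro n
    refine ⟨C, ?_⟩
    rintro x ⟨w', rfl⟩
    exact htermR n w'
  have hFbdd : IsBoundedUnder (· ≤ ·) atTop F :=
    Filter.isBoundedUnder_of ⟨C, fun n => hFle n⟩
  rcases Nat.eq_zero_or_pos d with hd | hd
  · -- trivial case d = 0
    subst hd
    have hspec : spectrum ℂ B = ∅ := by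
      ext z
      simp only [spectrum.mem_iff, Set.mem_empty_iff_false, iff_false, not_not]
      exact isUnit_of_subsingleton _
    have h0 : specRad B = 0 := by
      rw [specRad, spectralRadius, hspec]
      simp
    rw [h0, Real.zero_rpow (by positivity)]
    rw [hjsr]
    exact Filter.le_limsup_of_frequently_le
      (Filter.Frequently.of_forall fun n => hF0 n) hFbdd
  · haveI : Nonempty (Fin d) := ⟨⟨0, hd⟩⟩
    set opB := φ B with hopB
    have hsp : spectralRadius ℂ opB = spectralRadius ℂ B := by
      unfold spectralRadius
      rw [hopB, hφ, AlgEquiv.spectrum_eq]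
    have hnetop : spectralRadius ℂ opB ≠ ⊤ :=
      ne_top_of_le_ne_top ENNReal.coe_ne_top (spectrum.spectralRadius_le_nnnorm (𝕜 := ℂ) opB)
    have hG := spectrum.pow_nnnorm_pow_one_div_tendsto_nhds_spectralRadius opB
    have hGr : Tendsto (fun j : ℕ => ‖opB ^ j‖ ^ ((j : ℝ)⁻¹)) atTop (𝓝 (specRad B)) := by
      have h1 := (ENNReal.tendsto_toReal hnetop).comp hG
      have h2 : specRad B = (spectralRadius ℂ opB).toReal := by rw [hsp]; rfl
      have heq : (fun j : ℕ => ‖opB ^ j‖ ^ ((j : ℝ)⁻¹))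
          = ENNReal.toReal ∘ fun n : ℕ => (‖opB ^ n‖₊ : ℝ≥0∞) ^ (1 / (n : ℝ)) := by
        funext j
        simp only [Function.comp_apply]
        rw [← ENNReal.toReal_rpow, one_div, ENNReal.coe_toReal, coe_nnnorm]
      rw [h2, heq]
      exact h1
    have hGrm : Tendsto (fun j : ℕ => (‖opB ^ j‖ ^ ((j : ℝ)⁻¹)) ^ ((m : ℝ)⁻¹)) atTop
        (𝓝 (specRad B ^ ((m : ℝ)⁻¹))) :=
      hGr.rpow_const (Or.inr (by positivity))
    have hmne : (m : ℝ) ≠ 0 := Nat.cast_ne_zero.mpr hm.ne'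
    have hu : ∀ j : ℕ, (‖opB ^ j‖ ^ ((j : ℝ)⁻¹)) ^ ((m : ℝ)⁻¹)
        = ‖opB ^ j‖ ^ (((j * m : ℕ) : ℝ)⁻¹) := by
      intro j
      rw [← Real.rpow_mul (norm_nonneg _)]
      congr 1
      rw [Nat.cast_mul, mul_inv]
    simp only [hu] at hGrm
    -- key inequality
    have hkey : ∀ j : ℕ, ‖opB ^ j‖ ^ (((j * m : ℕ) : ℝ)⁻¹) ≤ F (j * m) := by
      intro j
      set g : ℕ → Matrix (Fin d) (Fin d) ℂ := fun t => A (w ⟨t % m, Nat.mod_lt t hm⟩) with hg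
      have hper : ∀ t, g (t + m) = g t := by
        intro t
        simp only [hg, Nat.add_mod_right]
      have hfun : (fun j : Fin m => A (w j)) = fun i : Fin m => g i.1 := by
        funext i
        simp only [hg]
        rw [show (⟨i.1 % m, Nat.mod_lt i.1 hm⟩ : Fin m) = i from Fin.ext (Nat.mod_eq_of_lt i.isLt)]
      have hBm : B = ((List.range m).map g).prod := by
        rw [← ofFn_eq_range_map m g, hB, hfun]
      set w' : Fin (j * m) → Fin k := fun i => w ⟨i.1 % m, Nat.mod_lt i.1 hm⟩ with hw'
      have hBj : (List.ofFn fun i : Fin (j * m) => A (w' i)).prod = B ^ j := by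
        have : (List.ofFn fun i : Fin (j * m) => A (w' i))
            = (List.ofFn fun i : Fin (j * m) => g i.1) := rfl
        rw [this, ofFn_eq_range_map (j * m) g, prod_range_mul g m hper j, ← hBm]
      have hmn : ‖opB ^ j‖ = mnorm (B ^ j) := by
        rw [mnorm, ← hφ, map_pow, hopB]
      rw [hmn, ← hBj]
      exact le_ciSup (hbdd (j * m)) w'
    -- limsup chain
    have hφt : Tendsto (fun j : ℕ => j * m) atTop atTop :=
      tendsto_atTop_mono (fun j => Nat.le_mul_of_pos_right j hm) tendsto_id
    have hcob : IsCoboundedUnder (· ≤ ·) atTop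
        (fun j : ℕ => ‖opB ^ j‖ ^ (((j * m : ℕ) : ℝ)⁻¹)) :=
      Filter.isCoboundedUnder_le_of_le atTop fun j => Real.rpow_nonneg (norm_nonneg _) _
    have hcompb : IsBoundedUnder (· ≤ ·) atTop (F ∘ fun j : ℕ => j * m) :=
      Filter.isBoundedUnder_of ⟨C, fun j => hFle _⟩
    have step1 : specRad B ^ ((m : ℝ)⁻¹)
        = limsup (fun j : ℕ => ‖opB ^ j‖ ^ (((j * m : ℕ) : ℝ)⁻¹)) atTop :=
      (hGrm.limsup_eq).symm
    have step2 : limsup (fun j : ℕ => ‖opB ^ j‖ ^ (((j * m : ℕ) : ℝ)⁻¹)) atTop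
        ≤ limsup (F ∘ fun j : ℕ => j * m) atTop :=
      Filter.limsup_le_limsup (Filter.Eventually.of_forall hkey) hcob hcompb
    have step3 : limsup (F ∘ fun j : ℕ => j * m) atTop ≤ limsup F atTop := by
      have hmap : limsup (F ∘ fun j : ℕ => j * m) atTop
          = limsup F (Filter.map (fun j : ℕ => j * m) atTop) := by
        rw [Filter.limsup, Filter.limsup, Filter.map_map]
      rw [hmap]
      refine Filter.limsup_le_limsup_of_le hφt ?_ (Filter.isBoundedUnder_of ⟨C, fun j => hFle j⟩)
      exact Filter.isCoboundedUnder_le_of_le _ fun j => hF0 _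
    rw [hjsr]
    calc specRad B ^ ((m : ℝ)⁻¹)
        = limsup (fun j : ℕ => ‖opB ^ j‖ ^ (((j * m : ℕ) : ℝ)⁻¹)) atTop := step1
      _ ≤ limsup (F ∘ fun j : ℕ => j * m) atTop := step2
      _ ≤ limsup F atTop := step3
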